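/- Let n ≥ 2 and let A, B ∈ GL_n(ℂ) with rank(A − B) = 1. If ⟨A, B⟩ acts reducibly on ℂⁿ (there is a nonzero proper common invariant subspace), then spec(A) ∩ spec(B) ≠ ∅. -/

import Mathlib

open Module

/-- If the induced map on a quotient has eigenvalue μ, then μ is in the spectrum. -/
lemma aux_quot_spec {V : Type*} [AddCommGroup V] [Module ℂ V] [FiniteDimensional ℂ V]
    (W : Submodule ℂ V) (f : Module.End ℂ V) (hf : W ≤ W.comap f)
    (μ : ℂ) (q : V ⧸ W) (hq : q ≠ 0) (heq : W.mapQ W f hf q = μ • q) :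
    μ ∈ spectrum ℂ f := by
  rw [spectrum.mem_iff]
  intro hu
  have hbij : Function.Bijective (algebraMap ℂ (Module.End ℂ V) μ - f) :=
    (Module.End.isUnit_iff _).mp hu
  set T : Module.End ℂ V := algebraMap ℂ (Module.End ℂ V) μ - f with hT
  have hTW : W ≤ W.comap T := by
    intro x hx
    have : T x = μ • x - f x := by
      simp [hT, Module.algebraMap_end_apply]
    simpa [Submodule.mem_comap, this] using W.sub_mem (W.smul_mem μ hx) (hf hx)
  have hTsurj : Function.Surjective (W.mapQ W T hTW) := by
    intro y
    obtain ⟨x, rfl⟩ := Submodule.Quotient.mk_surjective W y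
    obtain ⟨z, hz⟩ := hbij.2 x
    exact ⟨Submodule.Quotient.mk z, by rw [Submodule.mapQ_apply, hz]⟩
  have hTinj : Function.Injective (W.mapQ W T hTW) :=
    (LinearMap.injective_iff_surjective).mpr hTsurj
  have hTq : W.mapQ W T hTW q = 0 := by
    obtain ⟨x, rfl⟩ := Submodule.Quotient.mk_surjective W q
    have h1 : T x = μ • x - f x := by simp [hT, Module.algebraMap_end_apply]
    rw [Submodule.mapQ_apply, h1, Submodule.Quotient.mk_sub]
    rw [show (Submodule.Quotient.mk (f x) : V ⧸ W) = W.mapQ W f hf (Submodule.Quotient.mk x) from rfl, heq, ← Submodule.Quotient.mk_smul, sub_eq_zero]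
  exact hq (hTinj (by rw [hTq, map_zero]))

theorem stmt_10 (n : ℕ) (hn : 2 ≤ n) (A B : Matrix (Fin n) (Fin n) ℂ)
    (hA : IsUnit A) (hB : IsUnit B)
    (hrk : (A - B).rank = 1)
    (W : Submodule ℂ (Fin n → ℂ)) (hW0 : W ≠ ⊥) (hW1 : W ≠ ⊤)
    (hAW : ∀ x ∈ W, A.mulVec x ∈ W) (hBW : ∀ x ∈ W, B.mulVec x ∈ W) :
    (spectrum ℂ A ∩ spectrum ℂ B).Nonempty := by
  classical
  set f : Module.End ℂ (Fin n → ℂ) := Matrix.toLinAlgEquiv' A with hfdef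
  set g : Module.End ℂ (Fin n → ℂ) := Matrix.toLinAlgEquiv' B with hgdef
  have hfapp : ∀ x, f x = A.mulVec x := fun x => rfl
  have hgapp : ∀ x, g x = B.mulVec x := fun x => rfl
  have hAs : spectrum ℂ A = spectrum ℂ f :=
    (AlgEquiv.spectrum_eq Matrix.toLinAlgEquiv' A).symm
  have hBs : spectrum ℂ B = spectrum ℂ g :=
    (AlgEquiv.spectrum_eq Matrix.toLinAlgEquiv' B).symm
  rw [hAs, hBs]
  have hfW : W ≤ W.comap f := fun x hx => by simpa [hfapp] using hAW x hx
  have hgW : W ≤ W.comap g := fun x hx => by simpa [hgapp] using hBW x hx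
  by_cases hcase : ∀ x ∈ W, A.mulVec x = B.mulVec x
  · -- A = B on W: take an eigenvalue of f restricted to W
    haveI : Nontrivial W := Submodule.nontrivial_iff_ne_bot.mpr hW0
    obtain ⟨μ, hμ⟩ := Module.End.exists_eigenvalue (f.restrict hfW)
    obtain ⟨v, hv⟩ := hμ.exists_hasEigenvector
    have hvne : (v : Fin n → ℂ) ≠ 0 := fun h => hv.2 (Subtype.ext h)
    have hfv : f (v : Fin n → ℂ) = μ • (v : Fin n → ℂ) := by
      have := hv.apply_eq_smul
      exact congrArg Subtype.val this
    have hgv : g (v : Fin n → ℂ) = μ • (v : Fin n → ℂ) := by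
      rw [hgapp, ← hcase v v.2, ← hfapp, hfv]
    refine ⟨μ, ?_, ?_⟩
    · exact Module.End.hasEigenvalue_iff_mem_spectrum.mp
        (Module.End.hasEigenvalue_of_hasEigenvector
          ⟨Module.End.mem_eigenspace_iff.mpr hfv, hvne⟩)
    · exact Module.End.hasEigenvalue_iff_mem_spectrum.mp
        (Module.End.hasEigenvalue_of_hasEigenvector
          ⟨Module.End.mem_eigenspace_iff.mpr hgv, hvne⟩)
  · -- (A-B) is nonzero on W, so its 1-dimensional range lies in W
    push_neg at hcase
    obtain ⟨x, hxW, hxne⟩ := hcase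
    set v : Fin n → ℂ := (A - B).mulVec x with hvdef
    have hvne : v ≠ 0 := by
      simpa [hvdef, Matrix.sub_mulVec, sub_eq_zero] using hxne
    have hvW : v ∈ W := by
      have : v = A.mulVec x - B.mulVec x := by simp [hvdef, Matrix.sub_mulVec]
      rw [this]; exact W.sub_mem (hAW x hxW) (hBW x hxW)
    have hvrange : v ∈ LinearMap.range (A - B).mulVecLin :=
      ⟨x, by simp [hvdef, Matrix.sub_mulVec]⟩
    have hspan : Submodule.span ℂ {v} = LinearMap.range (A - B).mulVecLin := by
      apply Submodule.eq_of_le_of_finrank_le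
      · rw [Submodule.span_le, Set.singleton_subset_iff]; exact hvrange
      · rw [finrank_span_singleton hvne]
        exact le_of_eq hrk
    have hrange : ∀ y, (A - B).mulVec y ∈ W := by
      intro y
      have h1 : (A - B).mulVec y ∈ LinearMap.range (A - B).mulVecLin := ⟨y, rfl⟩
      rw [← hspan] at h1
      exact (Submodule.span_singleton_le_iff_mem v W).mpr hvW h1
    -- the induced maps on the quotient agree
    haveI : Nontrivial ((Fin n → ℂ) ⧸ W) :=
      Submodule.Quotient.nontrivial_iff.mpr (lt_top_iff_ne_top.mpr hW1).ne
    have hquot : W.mapQ W f hfW = W.mapQ W g hgW := by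
      apply LinearMap.ext
      intro qy
      obtain ⟨y, rfl⟩ := Submodule.Quotient.mk_surjective W qy
      rw [Submodule.mapQ_apply, Submodule.mapQ_apply, Submodule.Quotient.eq]
      have : f y - g y = (A - B).mulVec y := by
        simp [hfapp, hgapp, Matrix.sub_mulVec]
      rw [this]; exact hrange y
    obtain ⟨μ, hμ⟩ := Module.End.exists_eigenvalue (W.mapQ W f hfW)
    obtain ⟨q, hq⟩ := hμ.exists_hasEigenvector
    have hq0 : q ≠ 0 := hq.2
    have hqeq : W.mapQ W f hfW q = μ • q := hq.apply_eq_smul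
    refine ⟨μ, aux_quot_spec W f hfW μ q hq0 hqeq,
      aux_quot_spec W g hgW μ q hq0 (by rw [← hquot, hqeq])⟩
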